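/- Let F ⪯ A be a face and let M be a ℤ^d-graded R_A-module such that multiplication by ∂^F on M is invertible (M is a module over the localization R_A[(∂^F)^{−1}]) and such that M is I_F^A-torsion (every element of M is annihilated by some power of I_F^A). Then qdeg M is a union of translates of ℂF; more precisely, qdeg M = ⋃_{α ∈ tdeg M} (α + ℂF), i.e., a point β ∈ ℂ^d lies in qdeg M if and only if M_α ≠ 0 for some α ∈ (β + ℂF) ∩ ℤ^d. -/

import Mathlib

/-!
Common setup: `A` is a `d × n` integer matrix, given by its columns `a : Fin n → Lat d`,
with `ℤA = ℤ^d` (`SpansZ`) and `ℕA` pointed (`Pointed`).  Faces, semigroups, graded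
modules, quasidegree sets, the dualizing complex `ω•_{S_A}` and the Ishida complexes
`℧•_F` are formalized below; all cohomology statements are expressed via the
(ℤ^d-)graded components of these complexes.
-/

namespace GKZ

open scoped Classical

noncomputable section

abbrev Lat (d : ℕ) := Fin d → ℤ
abbrev CS (d : ℕ) := Fin d → ℂ
abbrev Laur (d : ℕ) := AddMonoidAlgebra ℂ (Lat d)

/-- Inclusion ℤ^d ⊆ ℂ^d. -/
def toC {d : ℕ} (α : Lat d) : CS d := fun i => (α i : ℂ)
/-- Inclusion ℤ^d ⊆ ℝ^d. -/
def toR {d : ℕ} (α : Lat d) : Fin d → ℝ := fun i => (α i : ℝ)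
/-- The monomial t^α in the Laurent polynomial ring ℂ[ℤ^d]. -/
def mono {d : ℕ} (α : Lat d) : Laur d := AddMonoidAlgebra.single α 1

variable {d n : ℕ}

/-- The affine semigroup ℕA generated by the columns of `A`. -/
def NA (a : Fin n → Lat d) : AddSubmonoid (Lat d) := AddSubmonoid.closure (Set.range a)

/-- ℕA is pointed: ℕA ∩ (−ℕA) = {0}. -/
def Pointed (a : Fin n → Lat d) : Prop := ∀ x ∈ NA a, -x ∈ NA a → x = 0

/-- ℤA = ℤ^d. -/
def SpansZ (a : Fin n → Lat d) : Prop :=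
  AddSubgroup.closure (Set.range a) = (⊤ : AddSubgroup (Lat d))

/-- The real cone ℝ₊F spanned by the columns indexed by `F`. -/
def cone (a : Fin n → Lat d) (F : Set (Fin n)) : Set (Fin d → ℝ) :=
  { x | ∃ c : Fin n → ℝ, (∀ i, 0 ≤ c i) ∧ (∀ i, i ∉ F → c i = 0) ∧ x = ∑ i, c i • toR (a i) }

/-- `F` is a face of `A`: ℝ₊F is a face of the cone ℝ₊A, and `F` consists of all the
columns of `A` lying on that face. -/
def IsFace (a : Fin n → Lat d) (F : Set (Fin n)) : Prop :=
  (∀ x y, x ∈ cone a Set.univ → y ∈ cone a Set.univ →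
      x + y ∈ cone a F → x ∈ cone a F ∧ y ∈ cone a F) ∧
  (∀ i, toR (a i) ∈ cone a F → i ∈ F)

/-- ℕF. -/
def NFace (a : Fin n → Lat d) (F : Set (Fin n)) : AddSubmonoid (Lat d) :=
  AddSubmonoid.closure (a '' F)

/-- ℤF. -/
def ZFace (a : Fin n → Lat d) (F : Set (Fin n)) : AddSubgroup (Lat d) :=
  AddSubgroup.closure (a '' F)

/-- ℂF ⊆ ℂ^d. -/
def CFace (a : Fin n → Lat d) (F : Set (Fin n)) : Submodule ℂ (CS d) :=
  Submodule.span ℂ (toC '' (a '' F))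

/-- d_F, the rank of ℤF. -/
def dimF (a : Fin n → Lat d) (F : Set (Fin n)) : ℕ :=
  Module.finrank ℤ (Submodule.span ℤ (a '' F))

/-- σ_F, the sum of the columns of F. -/
def sigmaF (a : Fin n → Lat d) (F : Set (Fin n)) : Lat d :=
  ∑ i : Fin n, if i ∈ F then a i else 0

/-- ε_A = a_1 + ⋯ + a_n. -/
def epsA (a : Fin n → Lat d) : Lat d := ∑ i : Fin n, a i

/-- ℕA − ℕF ⊆ ℤ^d. -/
def NAmNF (a : Fin n → Lat d) (F : Set (Fin n)) : Set (Lat d) :=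
  {γ | ∃ u ∈ NA a, ∃ v ∈ NFace a F, γ = u - v}

/-- ℕF − ℕA ⊆ ℤ^d. -/
def NFmNA (a : Fin n → Lat d) (F : Set (Fin n)) : Set (Lat d) :=
  {γ | ∃ u ∈ NFace a F, ∃ v ∈ NA a, γ = u - v}

/-- ℕF − ℕH ⊆ ℤ^d. -/
def NFmNH (a : Fin n → Lat d) (F H : Set (Fin n)) : Set (Lat d) :=
  {γ | ∃ u ∈ NFace a F, ∃ v ∈ NFace a H, γ = u - v}

/-- ℕA is normal: ℕA = ℤ^d ∩ ℝ₊A. -/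
def Normal (a : Fin n → Lat d) : Prop :=
  ∀ γ : Lat d, γ ∈ NA a ↔ toR γ ∈ cone a Set.univ

/-- The Zariski closure of a subset of ℂ^d. -/
def zClosure {d : ℕ} (T : Set (CS d)) : Set (CS d) :=
  {x | ∀ p : MvPolynomial (Fin d) ℂ, (∀ y ∈ T, MvPolynomial.eval y p = 0) →
    MvPolynomial.eval x p = 0}

def IsZClosed {d : ℕ} (Z : Set (CS d)) : Prop := zClosure Z ⊆ Z

/-- Irreducibility of a subset of ℂ^d in the Zariski topology. -/
def ZIrred {d : ℕ} (Z : Set (CS d)) : Prop :=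
  Z.Nonempty ∧ ∀ C₁ C₂ : Set (CS d), IsZClosed C₁ → IsZClosed C₂ →
    Z ⊆ C₁ ∪ C₂ → Z ⊆ C₁ ∨ Z ⊆ C₂

/-- Krull (topological) dimension of a subset of ℂ^d with the Zariski topology:
the Krull dimension of the poset of irreducible Zariski-closed subsets contained in it. -/
def zdim {d : ℕ} (Z : Set (CS d)) : WithBot ℕ∞ :=
  Order.krullDim {C : Set (CS d) // C ⊆ Z ∧ IsZClosed C ∧ ZIrred C}

/-- `Z` is an irreducible component of `W`: a maximal irreducible Zariski-closed subset. -/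
def IsIrredComp {d : ℕ} (Z W : Set (CS d)) : Prop :=
  Z ⊆ W ∧ IsZClosed Z ∧ ZIrred Z ∧
    ∀ Z' : Set (CS d), IsZClosed Z' → ZIrred Z' → Z ⊆ Z' → Z' ⊆ W → Z' = Z

/-- The type of faces of `A`. -/
def FaceT (a : Fin n → Lat d) := {G : Set (Fin n) // IsFace a G}

instance (a : Fin n → Lat d) : Finite (FaceT a) := by
  unfold FaceT; infer_instance

noncomputable instance (a : Fin n → Lat d) : Fintype (FaceT a) := Fintype.ofFinite _

/-- Degree set of the localization M[∂^{−G}] of the monomial module with degree set `E`: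
the set E − ℕG. -/
def locE (a : Fin n → Lat d) (E : Set (Lat d)) (G : Set (Fin n)) : Set (Lat d) :=
  {γ | ∃ f ∈ NFace a G, γ + f ∈ E}

/-- Functions supported on a subset, as a ℂ-submodule of the function space. -/
def funSupported {ι : Type*} (S : Set ι) : Submodule ℂ (ι → ℂ) where
  carrier := {c | ∀ i, i ∉ S → c i = 0}
  add_mem' := by
    intro x y hx hy i hi
    simp only [Set.mem_setOf_eq] at hx hy
    simp [Pi.add_apply, hx i hi, hy i hi]
  zero_mem' := by intro i _; rfl
  smul_mem' := by
    intro r x hx i hi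
    simp only [Set.mem_setOf_eq] at hx
    simp [Pi.smul_apply, hx i hi]

/-- The degree-γ part of the term of the Ishida complex ℧•_F(M) (base face `F`, monomial
module with degree set `E`) whose summands are indexed by the faces of absolute dimension
`j` (cohomological degree `j − d_F`): functions on the faces `G ⊇ F` with `d_G = j` and
`γ ∈ E − ℕG`. -/
def ishChain (a : Fin n → Lat d) (E : Set (Lat d)) (F : Set (Fin n)) (j : ℤ) (γ : Lat d) :
    Submodule ℂ (FaceT a → ℂ) :=
  funSupported {G : FaceT a | F ⊆ G.1 ∧ (dimF a G.1 : ℤ) = j ∧ γ ∈ locE a E G.1}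

/-- The differential of the Ishida complex (in each ℤ^d-degree): the component from a face
`G'` into a face `G''` covering it is `ε G' G''` times the natural localization map. -/
def ishDelta (a : Fin n → Lat d) (ε : Set (Fin n) → Set (Fin n) → ℂ) :
    (FaceT a → ℂ) →ₗ[ℂ] (FaceT a → ℂ) where
  toFun c := fun G'' => ∑ G' : FaceT a,
    if G'.1 ⊆ G''.1 ∧ dimF a G''.1 = dimF a G'.1 + 1 then ε G'.1 G''.1 * c G' else 0
  map_add' x y := by
    funext G''
    simp only [Pi.add_apply, ← Finset.sum_add_distrib]
    refine Finset.sum_congr rfl fun G' _ => ?_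
    by_cases h : G'.1 ⊆ G''.1 ∧ dimF a G''.1 = dimF a G'.1 + 1
    · simp [h, mul_add]
    · simp [h]
  map_smul' r x := by
    funext G''
    simp only [Pi.smul_apply, smul_eq_mul, RingHom.id_apply, Finset.mul_sum]
    refine Finset.sum_congr rfl fun G' _ => ?_
    by_cases h : G'.1 ⊆ G''.1 ∧ dimF a G''.1 = dimF a G'.1 + 1
    · simp only [h, and_self, if_true]; ring
    · simp [h]

/-- Degree-γ cocycles of the Ishida complex at absolute dimension `j`. -/
def ishZ (a : Fin n → Lat d) (E : Set (Lat d)) (ε : Set (Fin n) → Set (Fin n) → ℂ)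
    (F : Set (Fin n)) (j : ℤ) (γ : Lat d) : Submodule ℂ (FaceT a → ℂ) :=
  ishChain a E F j γ ⊓ LinearMap.ker (ishDelta a ε)

/-- Degree-γ coboundaries of the Ishida complex at absolute dimension `j`. -/
def ishB (a : Fin n → Lat d) (E : Set (Lat d)) (ε : Set (Fin n) → Set (Fin n) → ℂ)
    (F : Set (Fin n)) (j : ℤ) (γ : Lat d) : Submodule ℂ (FaceT a → ℂ) :=
  Submodule.map (ishDelta a ε) (ishChain a E F (j - 1) γ)

/-- The degree-γ component of the cohomology of the Ishida complex ℧•_F(M) at absolute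
dimension `j` (cohomological degree `j − d_F`). -/
abbrev ishH (a : Fin n → Lat d) (E : Set (Lat d)) (ε : Set (Fin n) → Set (Fin n) → ℂ)
    (F : Set (Fin n)) (j : ℤ) (γ : Lat d) :=
  ↥(ishZ a E ε F j γ) ⧸
    Submodule.comap (ishZ a E ε F j γ).subtype (ishB a E ε F j γ)

/-- Nonvanishing of the degree-γ component of the cohomology of the Ishida complex. -/
def ishHne (a : Fin n → Lat d) (E : Set (Lat d)) (ε : Set (Fin n) → Set (Fin n) → ℂ)
    (F : Set (Fin n)) (j : ℤ) (γ : Lat d) : Prop :=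
  ¬ (ishZ a E ε F j γ ≤ ishB a E ε F j γ)

/-- Degree-γ part of the term of ω•_{S_A} in cohomological degree `i`:
functions on the faces `G` with `d_{A/G} = i` and `γ ∈ ℕG − ℕA`. -/
def omChain (a : Fin n → Lat d) (i : ℤ) (γ : Lat d) : Submodule ℂ (FaceT a → ℂ) :=
  funSupported {G : FaceT a | (dimF a G.1 : ℤ) = (d : ℤ) - i ∧ γ ∈ NFmNA a G.1}

/-- Degree-γ part of the differential of ω•_{S_A}: the component from a face `G'` to a face
`G''` covered by it is `ε G' G''` times the natural projection ℂ{ℕG'−ℕA} → ℂ{ℕG''−ℕA}. -/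
def omDelta (a : Fin n → Lat d) (ε : Set (Fin n) → Set (Fin n) → ℂ) (γ : Lat d) :
    (FaceT a → ℂ) →ₗ[ℂ] (FaceT a → ℂ) where
  toFun c := fun G'' =>
    if γ ∈ NFmNA a G''.1 then
      ∑ G' : FaceT a,
        if G''.1 ⊆ G'.1 ∧ dimF a G'.1 = dimF a G''.1 + 1 then ε G'.1 G''.1 * c G' else 0
    else 0
  map_add' x y := by
    funext G''
    by_cases hγ : γ ∈ NFmNA a G''.1
    · simp only [Pi.add_apply, hγ, if_true, ← Finset.sum_add_distrib]
      refine Finset.sum_congr rfl fun G' _ => ?_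
      by_cases h : G''.1 ⊆ G'.1 ∧ dimF a G'.1 = dimF a G''.1 + 1
      · simp [h, mul_add]
      · simp [h]
    · simp [hγ]
  map_smul' r x := by
    funext G''
    by_cases hγ : γ ∈ NFmNA a G''.1
    · simp only [Pi.smul_apply, smul_eq_mul, RingHom.id_apply, hγ, if_true, Finset.mul_sum]
      refine Finset.sum_congr rfl fun G' _ => ?_
      by_cases h : G''.1 ⊆ G'.1 ∧ dimF a G'.1 = dimF a G''.1 + 1
      · simp only [h, and_self, if_true]; ring
      · simp [h]
    · simp [hγ]

/-- Degree-γ cocycles of ω•_{S_A} in cohomological degree `i`. -/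
def omZ (a : Fin n → Lat d) (ε : Set (Fin n) → Set (Fin n) → ℂ) (i : ℤ) (γ : Lat d) :
    Submodule ℂ (FaceT a → ℂ) :=
  omChain a i γ ⊓ LinearMap.ker (omDelta a ε γ)

/-- Degree-γ coboundaries of ω•_{S_A} in cohomological degree `i`. -/
def omB (a : Fin n → Lat d) (ε : Set (Fin n) → Set (Fin n) → ℂ) (i : ℤ) (γ : Lat d) :
    Submodule ℂ (FaceT a → ℂ) :=
  Submodule.map (omDelta a ε γ) (omChain a (i - 1) γ)

/-- Nonvanishing of H^i(ω•_{S_A})_γ. -/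
def omHne (a : Fin n → Lat d) (ε : Set (Fin n) → Set (Fin n) → ℂ) (i : ℤ) (γ : Lat d) : Prop :=
  ¬ (omZ a ε i γ ≤ omB a ε i γ)

/-- A ℤ^d-graded S_A-module, presented by its grading together with the (degree-shifting)
action of the monomials t^u, u ∈ ℕA. -/
structure GradedSAMod (a : Fin n → Lat d) (M : Type) [AddCommGroup M] [Module ℂ M] where
  decomp : Lat d → Submodule ℂ M
  internal : DirectSum.IsInternal decomp
  act : (u : Lat d) → u ∈ NA a → (M →ₗ[ℂ] M)
  act_zero : ∀ h0 : (0 : Lat d) ∈ NA a, act 0 h0 = LinearMap.id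
  act_add : ∀ (u : Lat d) (hu : u ∈ NA a) (v : Lat d) (hv : v ∈ NA a) (huv : u + v ∈ NA a),
    act (u + v) huv = (act u hu).comp (act v hv)
  act_grade : ∀ (u : Lat d) (hu : u ∈ NA a) (γ : Lat d), ∀ m ∈ decomp γ,
    act u hu m ∈ decomp (γ + u)

/-- Finite generation over S_A. -/
def GradedSAMod.FGmod {a : Fin n → Lat d} {M : Type} [AddCommGroup M] [Module ℂ M]
    (g : GradedSAMod a M) : Prop :=
  ∃ S : Finset M, ∀ m : M,
    m ∈ Submodule.span ℂ {x | ∃ u, ∃ hu : u ∈ NA a, ∃ s ∈ S, x = g.act u hu s}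

/-- Degrees of nonzero homogeneous elements of `M` that survive in the localization
`M[∂^{−H}]` (i.e. are killed by no power of t^{σ_H}). -/
def GradedSAMod.survTdeg {a : Fin n → Lat d} {M : Type} [AddCommGroup M] [Module ℂ M]
    (g : GradedSAMod a M) (H : Set (Fin n)) : Set (Lat d) :=
  {γ | ∃ m ∈ g.decomp γ, m ≠ 0 ∧ ∀ (k : ℕ) (hk : k • sigmaF a H ∈ NA a), g.act _ hk m ≠ 0}

/-- The quasidegree set of the localization `M[∂^{−H}]` of a finitely generated graded
module `M`: the union over `k` of the Zariski closures of the true degree sets of the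
finitely generated graded submodules t^{−kσ_H}·M of the localization. -/
def GradedSAMod.qdegLoc {a : Fin n → Lat d} {M : Type} [AddCommGroup M] [Module ℂ M]
    (g : GradedSAMod a M) (H : Set (Fin n)) : Set (CS d) :=
  ⋃ k : ℕ, zClosure (toC '' {γ : Lat d | γ + k • sigmaF a H ∈ g.survTdeg H})

/-- A ℂ-submodule is graded: it is spanned by its homogeneous elements. -/
def IsGradedSubC {d : ℕ} {M : Type} [AddCommGroup M] [Module ℂ M]
    (decomp : Lat d → Submodule ℂ M) (N : Submodule ℂ M) : Prop :=
  N = Submodule.span ℂ ((N : Set M) ∩ ⋃ γ : Lat d, (decomp γ : Set M))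

/-- A ℂ-submodule is an S_A-submodule: stable under the monomial action. -/
def IsStableSub {a : Fin n → Lat d} {M : Type} [AddCommGroup M] [Module ℂ M]
    (g : GradedSAMod a M) (N : Submodule ℂ M) : Prop :=
  ∀ (u : Lat d) (hu : u ∈ NA a), ∀ m ∈ N, g.act u hu m ∈ N

/-- The semigroup ring S_A = ℂ[ℕA] as a subalgebra of ℂ[ℤ^d]. -/
def SAlg (a : Fin n → Lat d) : Subalgebra ℂ (Laur d) :=
  Algebra.adjoin ℂ {x | ∃ α ∈ NA a, x = mono α}

/-- The monomial t^u, u ∈ ℕA, as an element of S_A. -/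
def smono (a : Fin n → Lat d) (u : Lat d) (hu : u ∈ NA a) : ↥(SAlg a) :=
  ⟨mono u, Algebra.subset_adjoin ⟨u, hu, rfl⟩⟩

/-- The underlying ℂ-vector space of the monomial module ℂ{E}: finitely supported
functions on `E`. -/
abbrev wMod (d : ℕ) (E : Set (Lat d)) := ↥(Finsupp.supported ℂ ℂ E)

/-- The action of the monomial t^w on ℂ{E}: shift the degree by `w`, truncate back to `E`. -/
def wAct {d : ℕ} (E : Set (Lat d)) (w : Lat d) : wMod d E →ₗ[ℂ] wMod d E :=
  (Finsupp.restrictDom ℂ ℂ E).comp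
    ((Finsupp.lmapDomain ℂ ℂ (fun γ => γ + w)).comp (Finsupp.supported ℂ ℂ E).subtype)

/-- The elements annihilated by some power of the ideal generated by the t^{a_i}, i ∉ F. -/
def torsionAt (a : Fin n → Lat d) (F : Set (Fin n)) {ML : Type} [AddCommGroup ML]
    [Module ℂ ML] (TL : (u : Lat d) → u ∈ NA a → (ML →ₗ[ℂ] ML)) : Set ML :=
  {y | ∃ k : ℕ, ∀ f : Fin k → Fin n, (∀ j, f j ∉ F) →
    ∀ h : (∑ j, a (f j)) ∈ NA a, TL (∑ j, a (f j)) h y = 0}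

/-- The toric ideal I_A ⊆ R_A = ℂ[∂_1,…,∂_n]. -/
def toricIdeal (a : Fin n → Lat d) : Ideal (MvPolynomial (Fin n) ℂ) :=
  RingHom.ker (MvPolynomial.aeval (fun i => mono (a i)) : MvPolynomial (Fin n) ℂ →ₐ[ℂ] Laur d)

/-- The ideal I_F^A = I_A + ⟨∂_i : a_i ∉ F⟩ of R_A. -/
def IFA (a : Fin n → Lat d) (F : Set (Fin n)) : Ideal (MvPolynomial (Fin n) ℂ) :=
  toricIdeal a ⊔ Ideal.span {p | ∃ i, i ∉ F ∧ p = MvPolynomial.X i}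

/-- An R_A-submodule is graded: it is spanned by its homogeneous elements. -/
def IsGradedSubR {d n : ℕ} {M : Type} [AddCommGroup M] [Module ℂ M]
    [Module (MvPolynomial (Fin n) ℂ) M]
    (decomp : Lat d → Submodule ℂ M) (N : Submodule (MvPolynomial (Fin n) ℂ) M) : Prop :=
  N = Submodule.span (MvPolynomial (Fin n) ℂ) ((N : Set M) ∩ ⋃ γ : Lat d, (decomp γ : Set M))

/-- `h` is the primitive integral support function of the facet `G`. -/
def IsPISF (a : Fin n → Lat d) (G : Set (Fin n)) (h : Lat d →ₗ[ℤ] ℤ) : Prop :=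
  (∃ x, h x = 1) ∧ (∀ i, 0 ≤ h (a i)) ∧ (∀ i, h (a i) = 0 ↔ i ∈ G)

/-- The ℂ-linear extension of an integral linear form to ℂ^d. -/
def hC {d : ℕ} (h : Lat d →ₗ[ℤ] ℤ) (β : CS d) : ℂ :=
  ∑ j : Fin d, β j * ((h (Pi.single j 1) : ℤ) : ℂ)


section
open scoped Classical
noncomputable section
variable {d n : ℕ}

lemma zClosure_mono {S T : Set (CS d)} (h : S ⊆ T) : zClosure S ⊆ zClosure T := by
  intro x hx p hp
  exact hx p (fun y hy => hp y (h hy))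

lemma zClosure_subset_of_closed {S C : Set (CS d)} (hSC : S ⊆ C) (hC : IsZClosed C) :
    zClosure S ⊆ C :=
  fun x hx => hC (zClosure_mono hSC hx)

lemma zClosure_empty : zClosure (∅ : Set (CS d)) = ∅ := by
  ext x
  simp only [zClosure, Set.mem_setOf_eq, Set.mem_empty_iff_false, iff_false, not_forall]
  exact ⟨1, fun y hy => hy.elim, by simp⟩

lemma subset_zClosure (S : Set (CS d)) : S ⊆ zClosure S := fun x hx p hp => hp x hx

lemma zClosure_iUnion_finset {ι : Type*} (s : Finset ι) (S : ι → Set (CS d)) {β : CS d}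
    (hβ : β ∈ zClosure (⋃ t ∈ s, S t)) : ∃ t ∈ s, β ∈ zClosure (S t) := by
  by_contra h
  push_neg at h
  have h' : ∀ t ∈ s, ∃ p : MvPolynomial (Fin d) ℂ,
      (∀ y ∈ S t, MvPolynomial.eval y p = 0) ∧ MvPolynomial.eval β p ≠ 0 := by
    intro t ht
    have := h t ht
    simp only [zClosure, Set.mem_setOf_eq, not_forall] at this
    obtain ⟨p, hp, hpβ⟩ := this
    exact ⟨p, hp, hpβ⟩
  choose! p hp1 hp2 using h'
  have := hβ (∏ t ∈ s, p t) ?_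
  · rw [map_prod] at this
    obtain ⟨t, ht, h0⟩ := Finset.prod_eq_zero_iff.mp this
    exact hp2 t ht h0
  · intro y hy
    simp only [Set.mem_iUnion] at hy
    obtain ⟨t, ht, hyt⟩ := hy
    rw [map_prod]
    exact Finset.prod_eq_zero ht (hp1 t ht y hyt)

/-- An affine translate of a linear subspace is Zariski closed. -/
lemma isZClosed_affine (v : CS d) (W : Submodule ℂ (CS d)) :
    IsZClosed {x : CS d | x - v ∈ W} := by
  intro x hx
  by_contra hxW
  simp only [Set.mem_setOf_eq] at hxW
  -- find a functional vanishing on W, nonzero at x - v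
  have hq : W.mkQ (x - v) ≠ 0 := by
    rw [Ne, Submodule.mkQ_apply, Submodule.Quotient.mk_eq_zero]
    exact hxW
  obtain ⟨g, hg⟩ : ∃ g : Module.Dual ℂ (CS d ⧸ W), g (W.mkQ (x - v)) ≠ 0 := by
    by_contra hg
    push_neg at hg
    exact hq ((Module.forall_dual_apply_eq_zero_iff ℂ _).mp hg)
  set f : CS d →ₗ[ℂ] ℂ := g.comp W.mkQ with hf
  have hfW : ∀ w ∈ W, f w = 0 := by
    intro w hw
    simp [hf, (Submodule.Quotient.mk_eq_zero W).mpr hw]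
  have hfeval : ∀ y : CS d, f y = ∑ j : Fin d, y j * f (Pi.single j 1) := by
    intro y
    conv_lhs => rw [pi_eq_sum_univ y]
    rw [map_sum]
    refine Finset.sum_congr rfl fun j _ => ?_
    rw [map_smul, smul_eq_mul]
    congr 1
    congr 1
    ext j'
    simp [Pi.single_apply, eq_comm]
  set p : MvPolynomial (Fin d) ℂ :=
    (∑ j : Fin d, MvPolynomial.C (f (Pi.single j 1)) * MvPolynomial.X j)
      - MvPolynomial.C (f v) with hpdef
  have hpe : ∀ y : CS d, MvPolynomial.eval y p = f (y - v) := by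
    intro y
    rw [map_sub f y v, hfeval y]
    simp only [hpdef, map_sub, map_sum, map_mul, MvPolynomial.eval_C, MvPolynomial.eval_X]
    congr 1
    exact Finset.sum_congr rfl fun j _ => mul_comm _ _
  have := hx p ?_
  · rw [hpe] at this
    exact absurd this (by simpa [hf] using hg)
  · intro y hy
    rw [hpe]
    exact hfW _ hy

end

end

section
open scoped Classical
noncomputable section
variable {d n : ℕ}

/-- A multivariate polynomial over ℂ vanishing at all natural-number points is zero. -/
lemma eq_zero_of_eval_nat_zero :
    ∀ (m : ℕ) (q : MvPolynomial (Fin m) ℂ),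
      (∀ c : Fin m → ℕ, MvPolynomial.eval (fun i => (c i : ℂ)) q = 0) → q = 0 := by
  intro m
  induction m with
  | zero =>
    intro q hq
    obtain ⟨x, rfl⟩ := MvPolynomial.C_surjective (Fin 0) q
    have := hq (fun i => 0)
    rw [MvPolynomial.eval_C] at this
    rw [this, map_zero]
  | succ m ih =>
    intro q hq
    have key : ∀ c : Fin m → ℕ,
        Polynomial.map (MvPolynomial.eval fun i => (c i : ℂ))
          (MvPolynomial.finSuccEquiv ℂ m q) = 0 := by
      intro c
      apply Polynomial.eq_zero_of_infinite_isRoot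
      apply Set.Infinite.mono (s := Set.range (fun t : ℕ => (t : ℂ)))
      · rintro x ⟨t, rfl⟩
        simp only [Set.mem_setOf_eq, Polynomial.IsRoot.def]
        have := hq (Fin.cons t c)
        rw [show (fun i => ((Fin.cons t c : Fin (m+1) → ℕ) i : ℂ))
            = Fin.cons (t : ℂ) (fun i => (c i : ℂ)) from ?_] at this
        · rw [MvPolynomial.eval_eq_eval_mv_eval'] at this
          exact this
        · funext i
          refine Fin.cases ?_ ?_ i <;> simp
      · exact Set.infinite_range_of_injective (fun s t hst => Nat.cast_injective hst)
    have hcoeff : ∀ j : ℕ, (MvPolynomial.finSuccEquiv ℂ m q).coeff j = 0 := by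
      intro j
      apply ih
      intro c
      have := key c
      have h2 := congrArg (fun P => Polynomial.coeff P j) this
      simpa [Polynomial.coeff_map] using h2
    have : MvPolynomial.finSuccEquiv ℂ m q = 0 := Polynomial.ext fun j => by
      rw [hcoeff j, Polynomial.coeff_zero]
    have h0 := congrArg (MvPolynomial.finSuccEquiv ℂ m).symm this
    simpa using h0

lemma toC_add (x y : Lat d) : toC (x + y) = toC x + toC y := by
  funext j; simp [toC]

lemma toC_sub (x y : Lat d) : toC (x - y) = toC x - toC y := by
  funext j; simp [toC]

lemma toC_mem_CFace (a : Fin n → Lat d) (F : Set (Fin n)) {f : Lat d}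
    (hf : f ∈ NFace a F) : toC f ∈ CFace a F := by
  induction hf using AddSubmonoid.closure_induction with
  | mem x hx => exact Submodule.subset_span ⟨x, hx, rfl⟩
  | zero => -- zero
    have : toC (0 : Lat d) = 0 := by funext j; simp [toC]
    rw [this]; exact Submodule.zero_mem _
  | add x y hx hy ihx ihy =>
    rw [toC_add]; exact Submodule.add_mem _ ihx ihy

/-- Elements of ℕF are nonnegative F-supported combinations of the columns. -/
lemma NFace_rep (a : Fin n → Lat d) (F : Set (Fin n)) {f : Lat d} (hf : f ∈ NFace a F) :
    ∃ u : Fin n → ℕ, (∀ i, i ∉ F → u i = 0) ∧ f = ∑ i : Fin n, u i • a i := by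
  induction hf using AddSubmonoid.closure_induction with
  | mem x hx =>
    obtain ⟨i, hiF, rfl⟩ := hx
    refine ⟨fun j => if j = i then 1 else 0, ?_, ?_⟩
    · intro j hj
      by_cases h : j = i
      · subst h; exact absurd hiF hj
      · simp [h]
    · simp [Finset.sum_ite_eq']
  | zero =>
    exact ⟨0, fun i _ => rfl, by simp⟩
  | add x y hx hy ihx ihy =>
    obtain ⟨u, hu0, rfl⟩ := ihx
    obtain ⟨v, hv0, rfl⟩ := ihy
    refine ⟨u + v, fun i hi => by simp [hu0 i hi, hv0 i hi], ?_⟩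
    rw [← Finset.sum_add_distrib]
    exact Finset.sum_congr rfl fun i _ => by rw [Pi.add_apply, add_smul]

end

end

section
open scoped Classical
noncomputable section
variable {d n : ℕ}

section Proj
variable {M : Type} [AddCommGroup M] [Module ℂ M]
  (decomp : Lat d → Submodule ℂ M)

/-- The projection onto the degree-γ component of an internal direct sum. -/
def proj (h : DirectSum.IsInternal decomp) (γ : Lat d) : M →ₗ[ℂ] M :=
  (decomp γ).subtype ∘ₗ
    (DirectSum.component ℂ (Lat d) (fun δ => ↥(decomp δ)) γ) ∘ₗ
    (LinearEquiv.ofBijective (DirectSum.coeLinearMap decomp) h).symm.toLinearMap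

lemma proj_of_mem (h : DirectSum.IsInternal decomp) {γ : Lat d} {x : M}
    (hx : x ∈ decomp γ) : proj decomp h γ x = x := by
  have h1 := h.ofBijective_coeLinearMap_of_mem hx
  have h2 : proj decomp h γ x
      = ((LinearEquiv.ofBijective (DirectSum.coeLinearMap decomp) h).symm x γ : M) := rfl
  rw [h2, h1]

lemma proj_of_mem_ne (h : DirectSum.IsInternal decomp) {γ δ : Lat d} {x : M}
    (hx : x ∈ decomp δ) (hne : δ ≠ γ) : proj decomp h γ x = 0 := by
  have h1 := h.ofBijective_coeLinearMap_of_mem_ne hne hx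
  have h2 : proj decomp h γ x
      = ((LinearEquiv.ofBijective (DirectSum.coeLinearMap decomp) h).symm x γ : M) := rfl
  rw [h2, h1, Submodule.coe_zero]
end Proj
end
section Act
noncomputable section
variable {d n : ℕ} {M : Type} [AddCommGroup M] [Module ℂ M]
  [Module (MvPolynomial (Fin n) ℂ) M] [IsScalarTower ℂ (MvPolynomial (Fin n) ℂ) M]
  {a : Fin n → Lat d} {decomp : Lat d → Submodule ℂ M}

lemma Xpow_smul_mem
    (hCompat : ∀ (i : Fin n) (γ : Lat d), ∀ m ∈ decomp γ,
      (MvPolynomial.X i : MvPolynomial (Fin n) ℂ) • m ∈ decomp (γ + a i))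
    (i : Fin n) (b : ℕ) {γ : Lat d} {m : M} (hm : m ∈ decomp γ) :
    ((MvPolynomial.X i : MvPolynomial (Fin n) ℂ) ^ b) • m ∈ decomp (γ + b • a i) := by
  induction b with
  | zero => simpa using hm
  | succ b ih =>
    have : ((MvPolynomial.X i : MvPolynomial (Fin n) ℂ) ^ (b+1)) • m
        = (MvPolynomial.X i : MvPolynomial (Fin n) ℂ) • (((MvPolynomial.X i : MvPolynomial (Fin n) ℂ) ^ b) • m) := by
      rw [pow_succ', mul_smul]
    rw [this]
    have h2 := hCompat i _ _ ih
    have : γ + b • a i + a i = γ + (b+1) • a i := by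
      rw [succ_nsmul, ← add_assoc]
    rwa [this] at h2

lemma monomial_smul_mem
    (hCompat : ∀ (i : Fin n) (γ : Lat d), ∀ m ∈ decomp γ,
      (MvPolynomial.X i : MvPolynomial (Fin n) ℂ) • m ∈ decomp (γ + a i))
    (u : Fin n →₀ ℕ) {γ : Lat d} {m : M} (hm : m ∈ decomp γ) :
    (MvPolynomial.monomial u (1:ℂ)) • m ∈ decomp (γ + ∑ i : Fin n, u i • a i) := by
  induction u using Finsupp.induction generalizing γ m with
  | zero => simpa using hm
  | single_add i b u hiu hb ih =>
    have hmono : (MvPolynomial.monomial (Finsupp.single i b + u) (1:ℂ))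
        = (MvPolynomial.X i : MvPolynomial (Fin n) ℂ) ^ b * MvPolynomial.monomial u 1 := by
      rw [MvPolynomial.X_pow_eq_monomial, MvPolynomial.monomial_mul, one_mul]
    rw [hmono, mul_smul]
    have h1 := ih hm
    have h2 := Xpow_smul_mem hCompat i b h1
    have hdeg : γ + ∑ j : Fin n, u j • a j + b • a i
        = γ + ∑ j : Fin n, (Finsupp.single i b + u) j • a j := by
      have : ∀ j : Fin n, ((Finsupp.single i b + u) j) • a j
          = (Finsupp.single i b) j • a j + u j • a j := by
        intro j; rw [Finsupp.add_apply, add_smul]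
      rw [Finset.sum_congr rfl (fun j _ => this j), Finset.sum_add_distrib]
      have hsingle : ∑ j : Fin n, (Finsupp.single i b) j • a j = b • a i := by
        rw [Finset.sum_eq_single i]
        · simp
        · intro j _ hj; rw [Finsupp.single_apply, if_neg (fun h => hj h.symm)]; simp
        · intro h; exact absurd (Finset.mem_univ i) h
      rw [hsingle]
      abel
    rwa [hdeg] at h2

lemma prod_ite_pow_smul_mem
    (hCompat : ∀ (i : Fin n) (γ : Lat d), ∀ m ∈ decomp γ,
      (MvPolynomial.X i : MvPolynomial (Fin n) ℂ) • m ∈ decomp (γ + a i))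
    (F : Set (Fin n)) (c : Fin n → ℕ) {γ : Lat d} {m : M} (hm : m ∈ decomp γ) :
    (∏ i : Fin n, if i ∈ F then (MvPolynomial.X i : MvPolynomial (Fin n) ℂ) ^ c i else 1) • m
      ∈ decomp (γ + ∑ i : Fin n, (if i ∈ F then c i • a i else 0)) := by
  classical
  have H : ∀ s : Finset (Fin n),
      (∏ i ∈ s, if i ∈ F then (MvPolynomial.X i : MvPolynomial (Fin n) ℂ) ^ c i else 1) • m
        ∈ decomp (γ + ∑ i ∈ s, (if i ∈ F then c i • a i else 0)) := by
    intro s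
    induction s using Finset.induction with
    | empty => simpa using hm
    | @insert i s his ih =>
      rw [Finset.prod_insert his, Finset.sum_insert his, mul_smul]
      by_cases hiF : i ∈ F
      · simp only [hiF, if_true]
        have h2 := Xpow_smul_mem hCompat i (c i) ih
        have : γ + ∑ j ∈ s, (if j ∈ F then c j • a j else 0) + c i • a i
            = γ + (c i • a i + ∑ j ∈ s, (if j ∈ F then c j • a j else 0)) := by abel
        rwa [this] at h2
      · simp only [hiF, if_false, one_smul, zero_add]
        exact ih
  exact H Finset.univ
end
end Act

end

section
open scoped Classical
noncomputable section
variable {d n : ℕ}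

/-- A monomial with at least `k` factors outside `F` lies in the `k`-th power of the
ideal generated by the variables outside `F`. -/
lemma monomial_mem_pow (F : Set (Fin n)) :
    ∀ (k : ℕ) (u : Fin n →₀ ℕ),
      k ≤ ∑ i ∈ Finset.univ.filter (fun i => i ∉ F), u i →
      (MvPolynomial.monomial u (1:ℂ)) ∈
        (Ideal.span {p : MvPolynomial (Fin n) ℂ | ∃ i, i ∉ F ∧ p = MvPolynomial.X i}) ^ k := by
  intro k
  induction k with
  | zero => intro u _; simp
  | succ k ih =>
    intro u hu
    have hpos : 0 < ∑ i ∈ Finset.univ.filter (fun i => i ∉ F), u i := by omega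
    obtain ⟨i, hi, hui⟩ : ∃ i, i ∈ Finset.univ.filter (fun i => i ∉ F) ∧ 0 < u i := by
      by_contra h
      push_neg at h
      have : ∑ i ∈ Finset.univ.filter (fun i => i ∉ F), u i = 0 :=
        Finset.sum_eq_zero fun i hi => by have := h i hi; omega
      omega
    have hiF : i ∉ F := by simpa using (Finset.mem_filter.mp hi).2
    set u' : Fin n →₀ ℕ := u - Finsupp.single i 1 with hu'
    have hrep : u = Finsupp.single i 1 + u' := by
      ext j
      simp only [Finsupp.add_apply, hu', Finsupp.tsub_apply, Finsupp.single_apply]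
      by_cases hj : i = j
      · subst hj; simp; omega
      · simp [hj]
    have hsum : k ≤ ∑ j ∈ Finset.univ.filter (fun j => j ∉ F), u' j := by
      have h1 : ∑ j ∈ Finset.univ.filter (fun j => j ∉ F), u j
          = (∑ j ∈ Finset.univ.filter (fun j => j ∉ F), (Finsupp.single i 1) j)
            + ∑ j ∈ Finset.univ.filter (fun j => j ∉ F), u' j := by
        rw [← Finset.sum_add_distrib]
        refine Finset.sum_congr rfl fun j _ => ?_
        conv_lhs => rw [hrep]
        rfl
      have h2 : ∑ j ∈ Finset.univ.filter (fun j => j ∉ F), (Finsupp.single i 1) j = 1 := by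
        rw [Finset.sum_eq_single i]
        · simp
        · intro j _ hj; rw [Finsupp.single_apply, if_neg fun h => hj h.symm]
        · intro h; exact absurd hi h
      omega
    have hmono : (MvPolynomial.monomial u (1:ℂ))
        = MvPolynomial.X i * MvPolynomial.monomial u' 1 := by
      rw [hrep, ← one_mul (1:ℂ), ← MvPolynomial.monomial_mul,
        ← MvPolynomial.X_pow_eq_monomial, pow_one, one_mul]
    rw [hmono, pow_succ']
    exact Ideal.mul_mem_mul (Ideal.subset_span ⟨i, hiF, rfl⟩) (ih u' hsum)

section Mod
variable {M : Type} [AddCommGroup M] [Module ℂ M]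
  [Module (MvPolynomial (Fin n) ℂ) M] [IsScalarTower ℂ (MvPolynomial (Fin n) ℂ) M]

/-- Decompose the action of a polynomial into actions of its monomials. -/
lemma smul_eq_sum_monomial_smul (r : MvPolynomial (Fin n) ℂ) (m : M) :
    r • m = ∑ u ∈ r.support, (r.coeff u) • ((MvPolynomial.monomial u (1:ℂ)) • m) := by
  conv_lhs => rw [r.as_sum]
  rw [Finset.sum_smul]
  refine Finset.sum_congr rfl fun u _ => ?_
  rw [show (MvPolynomial.monomial u (r.coeff u)) = (r.coeff u) • MvPolynomial.monomial u 1 by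
    rw [MvPolynomial.smul_monomial, smul_eq_mul, mul_one], smul_assoc]

variable {F : Set (Fin n)}

lemma injective_X_smul
    (hInv : Function.Bijective fun m : M =>
      (∏ i : Fin n, if i ∈ F then (MvPolynomial.X i : MvPolynomial (Fin n) ℂ) else 1) • m)
    {i : Fin n} (hi : i ∈ F) :
    Function.Injective fun m : M => (MvPolynomial.X i : MvPolynomial (Fin n) ℂ) • m := by
  intro m₁ m₂ h
  have hsplit : (∏ j : Fin n, if j ∈ F then (MvPolynomial.X j : MvPolynomial (Fin n) ℂ) else 1)
      = (∏ j ∈ Finset.univ.erase i, if j ∈ F then (MvPolynomial.X j : MvPolynomial (Fin n) ℂ) else 1)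
        * MvPolynomial.X i := by
    rw [mul_comm, ← Finset.mul_prod_erase Finset.univ _ (Finset.mem_univ i), if_pos hi]
  simp only at h
  apply hInv.injective
  show _ • m₁ = _ • m₂
  rw [hsplit, mul_smul, mul_smul, h]

lemma injective_prod_pow_smul
    (hInv : Function.Bijective fun m : M =>
      (∏ i : Fin n, if i ∈ F then (MvPolynomial.X i : MvPolynomial (Fin n) ℂ) else 1) • m)
    (c : Fin n → ℕ) :
    Function.Injective fun m : M =>
      (∏ i : Fin n, if i ∈ F then (MvPolynomial.X i : MvPolynomial (Fin n) ℂ) ^ c i else 1) • m := by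
  have hpow : ∀ (i : Fin n), i ∈ F → ∀ b : ℕ,
      Function.Injective fun m : M => ((MvPolynomial.X i : MvPolynomial (Fin n) ℂ) ^ b) • m := by
    intro i hi b
    induction b with
    | zero => intro m₁ m₂ h; simpa using h
    | succ b ih =>
      intro m₁ m₂ h
      simp only [pow_succ', mul_smul] at h
      exact ih (injective_X_smul hInv hi h)
  have H : ∀ s : Finset (Fin n),
      Function.Injective fun m : M =>
        (∏ i ∈ s, if i ∈ F then (MvPolynomial.X i : MvPolynomial (Fin n) ℂ) ^ c i else 1) • m := by
    intro s
    induction s using Finset.induction with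
    | empty => intro m₁ m₂ h; simpa using h
    | @insert i s his ih =>
      intro m₁ m₂ h
      simp only [Finset.prod_insert his, mul_smul] at h
      by_cases hiF : i ∈ F
      · rw [if_pos hiF] at h
        exact ih (hpow i hiF (c i) h)
      · rw [if_neg hiF, one_smul, one_smul] at h
        exact ih h
  exact H Finset.univ
end Mod
end

end


/-- Let `F ⪯ A` be a face and `M` a ℤ^d-graded R_A-module on which
multiplication by ∂^F is invertible and which is I_F^A-torsion.  Then
qdeg M = ⋃_{α ∈ tdeg M} (α + ℂF): a point β ∈ ℂ^d lies in qdeg M iff M_α ≠ 0 for some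
α ∈ (β + ℂF) ∩ ℤ^d. -/
theorem qdeg_of_invertible_torsion_module
    {d n : ℕ} (hd : 0 < d) (hn : 0 < n) (a : Fin n → Lat d)
    (hZA : SpansZ a) (hPt : Pointed a)
    (F : Set (Fin n)) (hF : IsFace a F)
    (M : Type) [AddCommGroup M] [Module ℂ M] [Module (MvPolynomial (Fin n) ℂ) M]
    [IsScalarTower ℂ (MvPolynomial (Fin n) ℂ) M]
    (decomp : Lat d → Submodule ℂ M)
    (hInternal : DirectSum.IsInternal decomp)
    (hCompat : ∀ (i : Fin n) (γ : Lat d), ∀ m ∈ decomp γ,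
      (MvPolynomial.X i : MvPolynomial (Fin n) ℂ) • m ∈ decomp (γ + a i))
    (hInv : Function.Bijective fun m : M =>
      (∏ i : Fin n, if i ∈ F then (MvPolynomial.X i : MvPolynomial (Fin n) ℂ) else 1) • m)
    (hTor : ∀ m : M, ∃ k : ℕ, ∀ r ∈ IFA a F ^ k, r • m = 0) :
    ∀ β : CS d,
      (β ∈ ⋃ (N : Submodule (MvPolynomial (Fin n) ℂ) M)
            (_ : IsGradedSubR decomp N ∧ N.FG),
          zClosure (toC '' {γ : Lat d | ∃ m ∈ N, m ∈ decomp γ ∧ m ≠ 0})) ↔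
      ∃ α : Lat d, decomp α ≠ ⊥ ∧ toC α - β ∈ CFace a F := by
  intro β
  constructor
  · -- forward direction
    intro hmemU
    rw [Set.mem_iUnion] at hmemU
    obtain ⟨N, hmemU⟩ := hmemU
    rw [Set.mem_iUnion] at hmemU
    obtain ⟨⟨hgr, hfg⟩, hβcl⟩ := hmemU
    set R := MvPolynomial (Fin n) ℂ with hR
    set T : Set (Lat d) := {γ : Lat d | ∃ m ∈ N, m ∈ decomp γ ∧ m ≠ 0} with hT
    -- Step A: finite homogeneous generating set
    obtain ⟨S, hS⟩ := hfg
    have hSmem : ∀ s ∈ S, (s : M) ∈ Submodule.span R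
        ((N : Set M) ∩ ⋃ γ : Lat d, (decomp γ : Set M)) := by
      intro s hs
      have : (s : M) ∈ N := hS ▸ Submodule.subset_span hs
      rwa [hgr] at this
    have hSfin : ∀ s ∈ S, ∃ ts : Finset M,
        ↑ts ⊆ (N : Set M) ∩ (⋃ γ : Lat d, (decomp γ : Set M)) ∧
        (s : M) ∈ Submodule.span R (↑ts : Set M) := by
      intro s hs
      exact Submodule.mem_span_finite_of_mem_span (hSmem s hs)
    choose! t ht1 ht2 using hSfin
    set G : Finset M := S.biUnion t with hG
    have hGsub : (↑G : Set M) ⊆ (N : Set M) ∩ ⋃ γ : Lat d, (decomp γ : Set M) := by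
      intro g hg
      rw [hG, Finset.coe_biUnion] at hg
      simp only [Set.mem_iUnion] at hg
      obtain ⟨s, hs, hgs⟩ := hg
      exact ht1 s hs hgs
    have hGspan : N = Submodule.span R (↑G : Set M) := by
      apply le_antisymm
      · rw [← hS]
        apply Submodule.span_le.mpr
        intro s hs
        exact Submodule.span_mono
          (Finset.coe_subset.mpr (Finset.subset_biUnion_of_mem t hs)) (ht2 s hs)
      · exact Submodule.span_le.mpr fun g hg => (hGsub hg).1
    -- degrees of the generators
    set αof : M → Lat d := fun g => if h : ∃ γ : Lat d, g ∈ decomp γ then h.choose else 0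
      with hαofdef
    have hαof : ∀ g ∈ G, g ∈ decomp (αof g) := by
      intro g hg
      have := (hGsub hg).2
      rw [Set.mem_iUnion] at this
      obtain ⟨γ, hγ⟩ := this
      have hex : ∃ γ : Lat d, g ∈ decomp γ := ⟨γ, hγ⟩
      simp only [hαofdef, dif_pos hex]
      exact hex.choose_spec
    -- Step B: a uniform torsion exponent
    choose kof hkof using hTor
    set k : ℕ := (G.sup kof) + 1 with hk
    have hkpos : 0 < k := Nat.succ_pos _
    have hkill : ∀ g ∈ G, ∀ r ∈ IFA a F ^ k, r • g = 0 := by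
      intro g hg r hr
      exact hkof g r (Ideal.pow_le_pow_right
        (le_trans (Finset.le_sup hg) (Nat.le_succ _)) hr)
    -- the pieces of the cover
    set P : M × (Fin n → ℕ) → Set (Lat d) := fun q =>
      {γ : Lat d | ∃ f ∈ NFace a F, γ = αof q.1 + (∑ i : Fin n, q.2 i • a i) + f} with hP
    set idx : Finset (M × (Fin n → ℕ)) :=
      G ×ˢ (Finset.image (fun w : Fin n → Fin k => fun i => ((w i : ℕ))) Finset.univ)
      with hidx
    -- Step C: the cover
    have hcover : ∀ γ ∈ T, ∃ q ∈ idx, γ ∈ P q := by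
      intro γ hγ
      obtain ⟨x, hxN, hxγ, hx0⟩ := hγ
      rw [hGspan, Submodule.mem_span_finset] at hxN
      obtain ⟨f, -, hsum⟩ := hxN
      have hx2 : x = ∑ g ∈ G, ∑ u ∈ (f g).support,
          ((f g).coeff u) • (if αof g + ∑ i : Fin n, u i • a i = γ
            then (MvPolynomial.monomial u (1:ℂ)) • g else 0) := by
        conv_lhs => rw [← proj_of_mem decomp hInternal hxγ, ← hsum]
        rw [map_sum]
        refine Finset.sum_congr rfl fun g hg => ?_
        rw [smul_eq_sum_monomial_smul, map_sum]
        refine Finset.sum_congr rfl fun u hu => ?_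
        rw [map_smul]
        congr 1
        by_cases hdeg : αof g + ∑ i : Fin n, u i • a i = γ
        · rw [if_pos hdeg]
          exact proj_of_mem decomp hInternal
            (hdeg ▸ monomial_smul_mem hCompat u (hαof g hg))
        · rw [if_neg hdeg]
          exact proj_of_mem_ne decomp hInternal
            (monomial_smul_mem hCompat u (hαof g hg)) hdeg
      have hxne : (∑ g ∈ G, ∑ u ∈ (f g).support,
          ((f g).coeff u) • (if αof g + ∑ i : Fin n, u i • a i = γ
            then (MvPolynomial.monomial u (1:ℂ)) • g else 0)) ≠ 0 := hx2 ▸ hx0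
      obtain ⟨g, hg, hne⟩ := Finset.exists_ne_zero_of_sum_ne_zero hxne
      obtain ⟨u, hu, hne2⟩ := Finset.exists_ne_zero_of_sum_ne_zero hne
      have hcond : αof g + ∑ i : Fin n, u i • a i = γ := by
        by_contra h
        rw [if_neg h, smul_zero] at hne2
        exact hne2 rfl
      have hmono0 : (MvPolynomial.monomial u (1:ℂ)) • g ≠ 0 := by
        intro h
        rw [if_pos hcond, h, smul_zero] at hne2
        exact hne2 rfl
      have htot : ∑ i ∈ Finset.univ.filter (fun i => i ∉ F), u i < k := by
        by_contra h
        push_neg at h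
        have hJ : (MvPolynomial.monomial u (1:ℂ)) ∈
            (Ideal.span {p : MvPolynomial (Fin n) ℂ | ∃ i, i ∉ F ∧ p = MvPolynomial.X i}) ^ k :=
          monomial_mem_pow F k u h
        have hIF : (MvPolynomial.monomial u (1:ℂ)) ∈ IFA a F ^ k :=
          Ideal.pow_right_mono le_sup_right k hJ
        exact hmono0 (hkill g hg _ hIF)
      have hub : ∀ i : Fin n, i ∉ F → u i < k := by
        intro i hi
        have hle : u i ≤ ∑ j ∈ Finset.univ.filter (fun j => j ∉ F), u j :=
          Finset.single_le_sum (fun j _ => Nat.zero_le _)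
            (Finset.mem_filter.mpr ⟨Finset.mem_univ i, hi⟩)
        omega
      set w : Fin n → ℕ := fun i => if i ∈ F then 0 else u i with hw
      have hwlt : ∀ i, w i < k := by
        intro i
        by_cases hi : i ∈ F
        · simp [hw, hi, hkpos]
        · simpa [hw, hi] using hub i hi
      refine ⟨(g, w), ?_, ?_⟩
      · rw [hidx, Finset.mem_product]
        refine ⟨hg, Finset.mem_image.mpr ⟨fun i => ⟨w i, hwlt i⟩, Finset.mem_univ _, rfl⟩⟩
      · refine ⟨∑ i : Fin n, (if i ∈ F then u i • a i else 0), ?_, ?_⟩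
        · apply AddSubmonoid.sum_mem
          intro i _
          by_cases hi : i ∈ F
          · rw [if_pos hi]
            have hai : a i ∈ NFace a F :=
              AddSubmonoid.subset_closure (show a i ∈ a '' F from ⟨i, hi, rfl⟩)
            exact AddSubmonoid.nsmul_mem (NFace a F) hai (u i)
          · rw [if_neg hi]
            exact AddSubmonoid.zero_mem _
        · rw [← hcond]
          simp only [hP]
          rw [add_assoc, ← Finset.sum_add_distrib]
          congr 1
          refine Finset.sum_congr rfl fun i _ => ?_
          by_cases hi : i ∈ F
          · simp [hw, hi]
          · simp [hw, hi]
    -- Step D: conclude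
    have hTsub : toC '' T ⊆ ⋃ q ∈ idx, toC '' (T ∩ P q) := by
      rintro _ ⟨γ, hγ, rfl⟩
      obtain ⟨q, hq, hγP⟩ := hcover γ hγ
      exact Set.mem_biUnion hq ⟨γ, ⟨hγ, hγP⟩, rfl⟩
    have hβ2 : β ∈ zClosure (⋃ q ∈ idx, toC '' (T ∩ P q)) :=
      zClosure_mono hTsub hβcl
    obtain ⟨q, hq, hβq⟩ := zClosure_iUnion_finset idx _ hβ2
    have hne : (T ∩ P q).Nonempty := by
      by_contra h
      rw [Set.not_nonempty_iff_eq_empty] at h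
      rw [h, Set.image_empty, zClosure_empty] at hβq
      exact hβq
    obtain ⟨α, hαT, hαP⟩ := hne
    obtain ⟨x, hxN, hxα, hx0⟩ := hαT
    refine ⟨α, (Submodule.ne_bot_iff _).mpr ⟨x, hxα, hx0⟩, ?_⟩
    have hsubset : toC '' (T ∩ P q) ⊆ {y : CS d | y - toC α ∈ CFace a F} := by
      rintro _ ⟨δ, ⟨hδT, hδP⟩, rfl⟩
      obtain ⟨f₁, hf₁, hδeq⟩ := hδP
      obtain ⟨f₂, hf₂, hαeq⟩ := hαP
      have : toC δ - toC α = toC f₁ - toC f₂ := by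
        have h1 : toC δ = toC (αof q.1) + toC (∑ i : Fin n, q.2 i • a i) + toC f₁ := by
          rw [hδeq, toC_add, toC_add]
        have h2 : toC α = toC (αof q.1) + toC (∑ i : Fin n, q.2 i • a i) + toC f₂ := by
          rw [hαeq, toC_add, toC_add]
        rw [h1, h2]
        abel
      simp only [Set.mem_setOf_eq, this]
      exact Submodule.sub_mem _ (toC_mem_CFace a F hf₁) (toC_mem_CFace a F hf₂)
    have hβaff := zClosure_subset_of_closed hsubset
      (isZClosed_affine (toC α) (CFace a F)) hβq
    have : β - toC α ∈ CFace a F := hβaff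
    have := Submodule.neg_mem _ this
    rwa [neg_sub] at this
  · -- backward direction
    rintro ⟨α, hα, hαβ⟩
    obtain ⟨m, hmem, hm0⟩ := (Submodule.ne_bot_iff _).mp hα
    set R := MvPolynomial (Fin n) ℂ with hR
    set N : Submodule R M := Submodule.span R {m} with hN
    have hgr : IsGradedSubR decomp N := by
      apply le_antisymm
      · rw [hN]
        apply Submodule.span_le.mpr
        intro x hx
        rw [Set.mem_singleton_iff] at hx
        rw [hx]
        exact Submodule.subset_span ⟨Submodule.mem_span_singleton_self m,
          Set.mem_iUnion.mpr ⟨α, hmem⟩⟩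
      · exact Submodule.span_le.mpr Set.inter_subset_left
    have hfg : N.FG := Submodule.fg_span_singleton m
    refine Set.mem_iUnion.mpr ⟨N, Set.mem_iUnion.mpr ⟨⟨hgr, hfg⟩, ?_⟩⟩
    -- membership in the Zariski closure
    intro p hp
    -- coefficients for β - toC α
    have hspan : β - toC α ∈ CFace a F := by
      have := Submodule.neg_mem _ hαβ
      simpa [neg_sub] using this
    have hEq : CFace a F
        = Submodule.span ℂ (Set.range (fun i : Fin n => if i ∈ F then toC (a i) else 0)) := by
      apply le_antisymm
      · apply Submodule.span_le.mpr
        rintro x ⟨y, ⟨i, hi, rfl⟩, rfl⟩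
        exact Submodule.subset_span ⟨i, by simp [hi]⟩
      · apply Submodule.span_le.mpr
        rintro x ⟨i, rfl⟩
        by_cases hi : i ∈ F
        · simp only [if_pos hi]
          exact Submodule.subset_span ⟨a i, ⟨i, hi, rfl⟩, rfl⟩
        · simp only [if_neg hi]
          exact Submodule.zero_mem _
    rw [hEq, Submodule.mem_span_range_iff_exists_fun] at hspan
    obtain ⟨c, hc⟩ := hspan
    -- the substituted polynomial
    set g : Fin d → MvPolynomial (Fin n) ℂ := fun j =>
      MvPolynomial.C ((α j : ℂ)) + ∑ i : Fin n,
        (if i ∈ F then MvPolynomial.C ((a i j : ℂ)) * MvPolynomial.X i else 0) with hg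
    set q : MvPolynomial (Fin n) ℂ := MvPolynomial.aeval g p with hq
    have hkey : ∀ z : Fin n → ℂ,
        MvPolynomial.eval z q = MvPolynomial.eval (fun j => MvPolynomial.eval z (g j)) p := by
      intro z
      rw [hq, MvPolynomial.aeval_def, MvPolynomial.algebraMap_eq, ← MvPolynomial.eval_assoc]
      rfl
    have hgval : ∀ (z : Fin n → ℂ) (j : Fin d),
        MvPolynomial.eval z (g j) = (α j : ℂ) + ∑ i : Fin n,
          (if i ∈ F then (a i j : ℂ) * z i else 0) := by
      intro z j
      simp only [hg, map_add, MvPolynomial.eval_C, map_sum, apply_ite (MvPolynomial.eval z),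
        map_mul, MvPolynomial.eval_X, map_zero]
    -- q vanishes at all natural points
    have hqnat : ∀ cn : Fin n → ℕ, MvPolynomial.eval (fun i => (cn i : ℂ)) q = 0 := by
      intro cn
      set γc : Lat d := α + ∑ i : Fin n, (if i ∈ F then cn i • a i else 0) with hγc
      have hxmem : (∏ i : Fin n, if i ∈ F then (MvPolynomial.X i : MvPolynomial (Fin n) ℂ) ^ cn i else 1) • m
          ∈ decomp γc := prod_ite_pow_smul_mem hCompat F cn hmem
      have hxN : (∏ i : Fin n, if i ∈ F then (MvPolynomial.X i : MvPolynomial (Fin n) ℂ) ^ cn i else 1) • m ∈ N :=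
        Submodule.smul_mem _ _ (Submodule.mem_span_singleton_self m)
      have hx0 : (∏ i : Fin n, if i ∈ F then (MvPolynomial.X i : MvPolynomial (Fin n) ℂ) ^ cn i else 1) • m ≠ 0 := by
        intro h
        exact hm0 (injective_prod_pow_smul hInv cn (h.trans (smul_zero _).symm))
      have hTmem : toC γc ∈ toC '' {γ : Lat d | ∃ m ∈ N, m ∈ decomp γ ∧ m ≠ 0} :=
        ⟨γc, ⟨_, hxN, hxmem, hx0⟩, rfl⟩
      have hp0 := hp _ hTmem
      have hpoint : (fun j => MvPolynomial.eval (fun i => ((cn i : ℕ) : ℂ)) (g j)) = toC γc := by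
        funext j
        rw [hgval]
        simp only [toC, hγc, Pi.add_apply, Finset.sum_apply, apply_ite (fun v : Lat d => v j),
          Pi.zero_apply, Pi.smul_apply, smul_eq_mul]
        push_cast
        congr 1
        refine Finset.sum_congr rfl fun i _ => ?_
        by_cases hi : i ∈ F
        · simp [hi, mul_comm]
        · simp [hi]
      rw [hkey, hpoint]
      exact hp0
    have hq0 : q = 0 := eq_zero_of_eval_nat_zero n q hqnat
    -- evaluate at the complex coefficients
    have := hkey c
    rw [hq0, map_zero] at this
    have hβ : (fun j => MvPolynomial.eval c (g j)) = β := by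
      funext j
      rw [hgval]
      have hcj := congrFun hc j
      simp only [Finset.sum_apply, Pi.sub_apply, Pi.smul_apply, smul_eq_mul, toC] at hcj
      have : ∑ i : Fin n, (if i ∈ F then (a i j : ℂ) * c i else 0)
          = β j - (α j : ℂ) := by
        rw [← hcj]
        refine Finset.sum_congr rfl fun i _ => ?_
        by_cases hi : i ∈ F
        · simp [hi, toC, mul_comm]
        · simp [hi]
      rw [this]
      ring
    rw [hβ] at this
    exact this.symm

end

end GKZ
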